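/- arXiv:1409.3403 — 2 statements merged into one kernel-verified Lean document; each statement's English description precedes it below -/
import Mathlib

section
/- Let φ₀, φ₁, φ₂, φ₃ be homogeneous quadratic polynomials in x₀, x₁, x₂ over ℂ satisfying φ₀φ₁ = φ₂φ₃ identically, such that no two of them are proportional (equivalently, the image of the corresponding map is not contained in a plane of the quadric u₀u₁ = u₂u₃). Then there exist linear forms ψ₀, ψ₁, ψ₂, ψ₃ with φ₀ = ψ₀ψ₁, φ₁ = ψ₂ψ₃, φ₂ = ψ₀ψ₂, φ₃ = ψ₁ψ₃. -/
open MvPolynomial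

noncomputable def Phi : MvPolynomial (Fin 3) ℂ →ₐ[ℂ] Polynomial (MvPolynomial (Fin 3) ℂ) :=
  MvPolynomial.aeval (fun i => Polynomial.C (MvPolynomial.X i) * Polynomial.X)

lemma Phi_monomial (u : Fin 3 →₀ ℕ) (c : ℂ) :
    Phi (monomial u c) = Polynomial.monomial u.degree (monomial u c) := by
  rw [MvPolynomial.monomial_eq, map_mul]
  have h1 : Phi (C c) = Polynomial.C (C c) := by
    simp [Phi, algebraMap_eq, Polynomial.algebraMap_apply]
  have h2 : Phi (u.prod fun n e => (X n : MvPolynomial (Fin 3) ℂ) ^ e)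
      = Polynomial.C (u.prod fun n e => (X n : MvPolynomial (Fin 3) ℂ) ^ e) *
        Polynomial.X ^ u.degree := by
    rw [map_finsuppProd]
    have step : ∀ n e, Phi ((X n : MvPolynomial (Fin 3) ℂ) ^ e)
        = Polynomial.C ((X n : MvPolynomial (Fin 3) ℂ) ^ e) * Polynomial.X ^ e := by
      intro n e
      rw [map_pow]
      have : Phi (X n) = Polynomial.C (X n) * Polynomial.X := by simp [Phi]
      rw [this, mul_pow, Polynomial.C_pow]
    simp only [step]
    rw [Finsupp.prod_mul]
    congr 1
    · rw [← map_finsuppProd]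
    · rw [Finsupp.prod, Finset.prod_pow_eq_pow_sum, Finsupp.degree]; rfl
  rw [h1, h2, ← mul_assoc, ← Polynomial.C_mul, ← MvPolynomial.monomial_eq,
    Polynomial.C_mul_X_pow_eq_monomial]

lemma coeff_Phi (p : MvPolynomial (Fin 3) ℂ) (d : ℕ) :
    (Phi p).coeff d = homogeneousComponent d p := by
  induction p using MvPolynomial.induction_on' with
  | monomial u c =>
      rw [Phi_monomial, Polynomial.coeff_monomial,
        homogeneousComponent_of_mem (isHomogeneous_monomial c rfl)]
      by_cases h : d = u.degree
      · simp [h]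
      · simp [h, Ne.symm h]
  | add p q hp hq => simp [map_add, hp, hq]

lemma Phi_eq_monomial {p : MvPolynomial (Fin 3) ℂ} {n : ℕ} (h : p.IsHomogeneous n) :
    Phi p = Polynomial.monomial n p := by
  ext d
  rw [coeff_Phi, Polynomial.coeff_monomial, homogeneousComponent_of_mem h]
  by_cases hd : d = n
  · simp [hd]
  · simp [hd, Ne.symm hd]

lemma isHomogeneous_of_components {p : MvPolynomial (Fin 3) ℂ} {n : ℕ}
    (h : ∀ e, e ≠ n → homogeneousComponent e p = 0) : p.IsHomogeneous n := by
  intro d hd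
  rw [show (Finsupp.weight 1 : (Fin 3 →₀ ℕ) →+ ℕ) = Finsupp.degree from Finsupp.degree_eq_weight_one.symm]
  by_contra hne
  have h0 := h d.degree hne
  have hc := coeff_homogeneousComponent (n := d.degree) (φ := p) d
  rw [h0] at hc
  simp at hc
  exact hd hc.symm

lemma factor_isHomogeneous {p q : MvPolynomial (Fin 3) ℂ} (hp : p ≠ 0) (hq : q ≠ 0)
    {n : ℕ} (h : (p * q).IsHomogeneous n) :
    ∃ a b : ℕ, a + b = n ∧ p.IsHomogeneous a ∧ q.IsHomogeneous b := by
  have hpq : p * q ≠ 0 := mul_ne_zero hp hq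
  have hPhi : Phi p * Phi q = Polynomial.monomial n (p * q) := by
    rw [← map_mul]; exact Phi_eq_monomial h
  have hm0 : (Polynomial.monomial n (p * q) : Polynomial (MvPolynomial (Fin 3) ℂ)) ≠ 0 := by
    simpa [Polynomial.monomial_eq_zero_iff] using hpq
  have hP : Phi p ≠ 0 := fun h0 => hm0 (by rw [← hPhi, h0, zero_mul])
  have hQ : Phi q ≠ 0 := fun h0 => hm0 (by rw [← hPhi, h0, mul_zero])
  have hd : (Phi p).natDegree + (Phi q).natDegree = n := by
    rw [← Polynomial.natDegree_mul hP hQ, hPhi, Polynomial.natDegree_monomial]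
    simp [hpq]
  have ht : (Phi p).natTrailingDegree + (Phi q).natTrailingDegree = n := by
    rw [← Polynomial.natTrailingDegree_mul hP hQ, hPhi,
      Polynomial.natTrailingDegree_monomial hpq]
  have l1 := Polynomial.natTrailingDegree_le_natDegree (Phi p)
  have l2 := Polynomial.natTrailingDegree_le_natDegree (Phi q)
  refine ⟨(Phi p).natDegree, (Phi q).natDegree, hd, ?_, ?_⟩
  · apply isHomogeneous_of_components
    intro e he
    rw [← coeff_Phi]
    rcases lt_or_gt_of_ne he with h' | h'
    · exact Polynomial.coeff_eq_zero_of_lt_natTrailingDegree (by omega)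
    · exact Polynomial.coeff_eq_zero_of_natDegree_lt h'
  · apply isHomogeneous_of_components
    intro e he
    rw [← coeff_Phi]
    rcases lt_or_gt_of_ne he with h' | h'
    · exact Polynomial.coeff_eq_zero_of_lt_natTrailingDegree (by omega)
    · exact Polynomial.coeff_eq_zero_of_natDegree_lt h'

lemma homog_zero_eq {p : MvPolynomial (Fin 3) ℂ} (h : p.IsHomogeneous 0) :
    ∃ c : ℂ, p = C c := by
  refine ⟨coeff 0 p, ?_⟩
  have h0 := homogeneousComponent_of_mem (m := 0) h
  rw [if_pos rfl] at h0
  conv_lhs => rw [← h0]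
  rw [homogeneousComponent_zero]

lemma not_isUnit_of_homog {p : MvPolynomial (Fin 3) ℂ} {n : ℕ} (h : p.IsHomogeneous n)
    (hp : p ≠ 0) (hn : n ≠ 0) : ¬ IsUnit p := by
  intro hu
  obtain ⟨q, hq⟩ := isUnit_iff_exists_inv.mp hu
  have hq0 : q ≠ 0 := fun h0 => one_ne_zero (α := MvPolynomial (Fin 3) ℂ) (by rw [← hq, h0, mul_zero])
  obtain ⟨a, b, hab, hpa, _⟩ := factor_isHomogeneous hp hq0
    (by rw [hq]; exact isHomogeneous_one _ _)
  have : n = a := h.inj_right hpa hp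
  omega

lemma prime_of_linear {a : MvPolynomial (Fin 3) ℂ} (ha : a.IsHomogeneous 1) (ha0 : a ≠ 0) :
    Prime a := by
  rw [← UniqueFactorizationMonoid.irreducible_iff_prime]
  constructor
  · exact not_isUnit_of_homog ha ha0 one_ne_zero
  · intro u v huv
    have hu0 : u ≠ 0 := fun h => ha0 (by rw [huv, h, zero_mul])
    have hv0 : v ≠ 0 := fun h => ha0 (by rw [huv, h, mul_zero])
    obtain ⟨i, j, hij, hi, hj⟩ := factor_isHomogeneous hu0 hv0 (huv ▸ ha)
    have hij' : i = 0 ∨ j = 0 := by omega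
    rcases hij' with h0 | h0
    · left
      obtain ⟨c, hc⟩ := homog_zero_eq (h0 ▸ hi)
      have : c ≠ 0 := fun h => hu0 (by rw [hc, h, map_zero])
      exact hc ▸ (this.isUnit.map (C : ℂ →+* MvPolynomial (Fin 3) ℂ))
    · right
      obtain ⟨c, hc⟩ := homog_zero_eq (h0 ▸ hj)
      have : c ≠ 0 := fun h => hv0 (by rw [hc, h, map_zero])
      exact hc ▸ (this.isUnit.map (C : ℂ →+* MvPolynomial (Fin 3) ℂ))

/-- If `p`, `q` are nonzero homogeneous of degree 2 and `p ∣ q` then `q = t • p`. -/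
lemma smul_of_dvd {p q : MvPolynomial (Fin 3) ℂ} (hp : p.IsHomogeneous 2)
    (hq : q.IsHomogeneous 2) (hq0 : q ≠ 0) (hdvd : p ∣ q) : ∃ t : ℂ, q = t • p := by
  obtain ⟨r, hr⟩ := hdvd
  have hp0 : p ≠ 0 := fun h => hq0 (by rw [hr, h, zero_mul])
  have hr0 : r ≠ 0 := fun h => hq0 (by rw [hr, h, mul_zero])
  obtain ⟨a, b, hab, hpa, hrb⟩ := factor_isHomogeneous hp0 hr0 (hr ▸ hq)
  have ha2 : a = 2 := (hp.inj_right hpa hp0).symm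
  obtain ⟨c, hc⟩ := homog_zero_eq (show r.IsHomogeneous 0 by
    have : b = 0 := by omega
    exact this ▸ hrb)
  exact ⟨c, by rw [hr, hc, smul_eq_C_mul, mul_comm]⟩

/-- Key step: if `p * q = a * b * r`, `a ∣ p`, `p` homogeneous of degree 2 and not a
multiple of `a * b`, then `b ∣ q`. -/
lemma helper {a b p q r : MvPolynomial (Fin 3) ℂ}
    (ha1 : a.IsHomogeneous 1) (hb1 : b.IsHomogeneous 1) (hb : Prime b)
    (hp2 : p.IsHomogeneous 2) (hp0 : p ≠ 0)
    (hpq : p * q = a * b * r) (hap : a ∣ p)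
    (hnp : ∀ t : ℂ, p ≠ t • (a * b)) : b ∣ q := by
  obtain ⟨s, hs⟩ := hap
  have ha0 : a ≠ 0 := fun h => hp0 (by rw [hs, h, zero_mul])
  have hbs : ¬ b ∣ s := by
    rintro ⟨u, hu⟩
    have hpab : p = a * b * u := by rw [hs, hu, mul_assoc]
    have hu0 : u ≠ 0 := fun h => hp0 (by rw [hpab, h, mul_zero])
    have hab0 : a * b ≠ 0 := mul_ne_zero ha0 hb.ne_zero
    obtain ⟨i, j, hij, hi, hj⟩ := factor_isHomogeneous hab0 hu0 (hpab ▸ hp2)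
    have h2 : (1 : ℕ) + 1 = i := (ha1.mul hb1).inj_right hi hab0
    obtain ⟨c, hc⟩ := homog_zero_eq (show u.IsHomogeneous 0 by
      have : j = 0 := by omega
      exact this ▸ hj)
    exact hnp c (by rw [hpab, hc, smul_eq_C_mul]; ring)
  have hsq : s * q = b * r := by
    apply mul_left_cancel₀ ha0
    rw [← mul_assoc, ← hs, hpq]; ring
  rcases hb.2.2 s q ⟨r, hsq⟩ with h | h
  · exact absurd h hbs
  · exact h

/-- Let `φ₀, φ₁, φ₂, φ₃` be homogeneous quadratic polynomials in `x₀, x₁, x₂`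
over `ℂ` with `φ₀φ₁ = φ₂φ₃`, no two of which are proportional. Then there exist
linear forms `ψ₀, ψ₁, ψ₂, ψ₃` with `φ₀ = ψ₀ψ₁`, `φ₁ = ψ₂ψ₃`, `φ₂ = ψ₀ψ₂`,
`φ₃ = ψ₁ψ₃`. -/
theorem quadric_parametrization_factors
    (φ : Fin 4 → MvPolynomial (Fin 3) ℂ)
    (hφ : ∀ α, (φ α).IsHomogeneous 2)
    (hrel : φ 0 * φ 1 = φ 2 * φ 3)
    (hprop : ∀ α β : Fin 4, α ≠ β → ∀ t : ℂ, φ α ≠ t • φ β) :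
    ∃ ψ : Fin 4 → MvPolynomial (Fin 3) ℂ,
      (∀ α, (ψ α).IsHomogeneous 1) ∧
      φ 0 = ψ 0 * ψ 1 ∧ φ 1 = ψ 2 * ψ 3 ∧ φ 2 = ψ 0 * ψ 2 ∧ φ 3 = ψ 1 * ψ 3 := by
  -- all φ α are nonzero
  have hne0 : ∀ α β : Fin 4, α ≠ β → φ α ≠ 0 := fun α β hab h0 =>
    hprop α β hab 0 (by rw [h0, zero_smul])
  have hne : ∀ α, φ α ≠ 0 := by
    intro α
    fin_cases α
    · exact hne0 0 1 (by decide)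
    · exact hne0 1 0 (by decide)
    · exact hne0 2 0 (by decide)
    · exact hne0 3 0 (by decide)
  -- φ 2 is not irreducible
  have hnirr : ¬ Irreducible (φ 2) := by
    intro hirr
    have hpr : Prime (φ 2) := UniqueFactorizationMonoid.irreducible_iff_prime.mp hirr
    have hdvd : φ 2 ∣ φ 0 * φ 1 := ⟨φ 3, hrel⟩
    rcases hpr.2.2 _ _ hdvd with h | h
    · obtain ⟨t, ht⟩ := smul_of_dvd (hφ 2) (hφ 0) (hne 0) h
      exact hprop 0 2 (by decide) t ht
    · obtain ⟨t, ht⟩ := smul_of_dvd (hφ 2) (hφ 1) (hne 1) h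
      exact hprop 1 2 (by decide) t ht
  -- hence φ 2 = a * b with a, b linear
  have hnu : ¬ IsUnit (φ 2) := not_isUnit_of_homog (hφ 2) (hne 2) two_ne_zero
  rw [irreducible_iff] at hnirr
  push_neg at hnirr
  obtain ⟨a, b, hab, hua, hub⟩ := hnirr hnu
  have ha0 : a ≠ 0 := fun h => hne 2 (by rw [hab, h, zero_mul])
  have hb0 : b ≠ 0 := fun h => hne 2 (by rw [hab, h, mul_zero])
  obtain ⟨i, j, hij, hi, hj⟩ := factor_isHomogeneous ha0 hb0 (hab ▸ hφ 2)
  have hi0 : i ≠ 0 := by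
    rintro rfl
    obtain ⟨c, hc⟩ := homog_zero_eq hi
    have : c ≠ 0 := fun h => ha0 (by rw [hc, h, map_zero])
    exact hua (hc ▸ this.isUnit.map (C : ℂ →+* MvPolynomial (Fin 3) ℂ))
  have hj0 : j ≠ 0 := by
    rintro rfl
    obtain ⟨c, hc⟩ := homog_zero_eq hj
    have : c ≠ 0 := fun h => hb0 (by rw [hc, h, map_zero])
    exact hub (hc ▸ this.isUnit.map (C : ℂ →+* MvPolynomial (Fin 3) ℂ))
  have hi1 : i = 1 := by omega
  have hj1 : j = 1 := by omega
  subst hi1 hj1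
  have hpa : Prime a := prime_of_linear hi ha0
  have hpb : Prime b := prime_of_linear hj hb0
  have hrel' : φ 0 * φ 1 = a * b * φ 3 := by rw [hrel, hab]
  -- we can arrange a' ∣ φ 0, b' ∣ φ 1 with φ 2 = a' * b'
  have key : ∃ a' b' : MvPolynomial (Fin 3) ℂ, a'.IsHomogeneous 1 ∧ b'.IsHomogeneous 1 ∧
      φ 2 = a' * b' ∧ a' ∣ φ 0 ∧ b' ∣ φ 1 := by
    have hadvd : a ∣ φ 0 * φ 1 := ⟨b * φ 3, by rw [hrel']; ring⟩
    rcases hpa.2.2 _ _ hadvd with h | h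
    · refine ⟨a, b, hi, hj, hab, h, ?_⟩
      exact helper hi hj hpb (hφ 0) (hne 0) hrel' h
        (fun t ht => hprop 0 2 (by decide) t (by rw [ht, hab]))
    · refine ⟨b, a, hj, hi, by rw [hab, mul_comm], ?_, h⟩
      exact helper hi hj hpb (hφ 1) (hne 1)
        (by rw [mul_comm, hrel']) h
        (fun t ht => hprop 1 2 (by decide) t (by rw [ht, hab]))
  obtain ⟨a', b', ha', hb', hab', ⟨ψ1, h0⟩, ⟨ψ3, h1⟩⟩ := key
  have ha'0 : a' ≠ 0 := fun h => hne 2 (by rw [hab', h, zero_mul])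
  have hb'0 : b' ≠ 0 := fun h => hne 2 (by rw [hab', h, mul_zero])
  have hψ1 : ψ1 ≠ 0 := fun h => hne 0 (by rw [h0, h, mul_zero])
  have hψ3 : ψ3 ≠ 0 := fun h => hne 1 (by rw [h1, h, mul_zero])
  have hψ1h : ψ1.IsHomogeneous 1 := by
    obtain ⟨i, j, hij, hi', hj'⟩ := factor_isHomogeneous ha'0 hψ1 (h0 ▸ hφ 0)
    have : (1 : ℕ) = i := ha'.inj_right hi' ha'0
    have : j = 1 := by omega
    exact this ▸ hj'
  have hψ3h : ψ3.IsHomogeneous 1 := by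
    obtain ⟨i, j, hij, hi', hj'⟩ := factor_isHomogeneous hb'0 hψ3 (h1 ▸ hφ 1)
    have : (1 : ℕ) = i := hb'.inj_right hi' hb'0
    have : j = 1 := by omega
    exact this ▸ hj'
  have h3 : φ 3 = ψ1 * ψ3 := by
    apply mul_left_cancel₀ (mul_ne_zero ha'0 hb'0)
    linear_combination (φ 1) * h0 + (a' * ψ1) * h1 - hrel - (φ 3) * hab'
  refine ⟨![a', ψ1, b', ψ3], ?_, ?_, ?_, ?_, ?_⟩
  · intro α; fin_cases α <;> simpa
  · simpa using h0
  · simpa using h1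
  · simpa using hab'
  · simpa using h3
end

section
/- The quadratic maps Φ₂ : [x₀:x₁:x₂] ↦ [x₀²:x₀x₁:x₁²:x₂x₀] and Φ₃ : [x₀:x₁:x₂] ↦ [x₀²:x₀x₁:x₁²:x₂²] are not projectively equivalent: there exist no projective transformations η ∈ PGL₃ (source) and μ ∈ PGL₄ (target) with Φ₂ = μ ∘ Φ₃ ∘ η on a nonempty Zariski open set. (One distinguishing invariant: Φ₂ is co-trivial — every line maps into a plane through [0:0:1:0] — while Φ₃ is not co-trivial.) -/
open Filter Topology Set

/-- Each coordinate of a linear equivalence between finite-dimensional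
coordinate spaces is analytic. -/
lemma coord_analytic {n m : ℕ} (e : (Fin n → ℂ) ≃ₗ[ℂ] (Fin m → ℂ)) (j : Fin m) :
    AnalyticOnNhd ℂ (fun x => e x j) Set.univ := by
  have : (fun x => e x j)
      = ⇑((ContinuousLinearMap.proj j).comp
          (LinearMap.toContinuousLinearMap e.toLinearMap)) := by
    funext x
    simp
  rw [this]
  exact ContinuousLinearMap.analyticOnNhd _ _

lemma proj_analytic {n : ℕ} (j : Fin n) :
    AnalyticOnNhd ℂ (fun x : Fin n → ℂ => x j) Set.univ :=
  (ContinuousLinearMap.proj j : (Fin n → ℂ) →L[ℂ] ℂ).analyticOnNhd _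

/-- The quadratic maps `Φ₂ : [x₀:x₁:x₂] ↦ [x₀² : x₀x₁ : x₁² : x₂x₀]` and
`Φ₃ : [x₀:x₁:x₂] ↦ [x₀² : x₀x₁ : x₁² : x₂²]` are not projectively equivalent:
there are no linear changes of coordinates `g` in the source and `h` in the
target such that `Φ₂` and `h ∘ Φ₃ ∘ g` agree (projectively, pointwise up to
nonzero scalars) on some nonempty open set. -/
theorem phi2_phi3_not_equivalent :
    ¬ ∃ (g : (Fin 3 → ℂ) ≃ₗ[ℂ] (Fin 3 → ℂ))
        (h : (Fin 4 → ℂ) ≃ₗ[ℂ] (Fin 4 → ℂ))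
        (U : Set (Fin 3 → ℂ)), IsOpen U ∧ U.Nonempty ∧
        ∀ x ∈ U, ∃ c : ℂ, c ≠ 0 ∧
          (![x 0 ^ 2, x 0 * x 1, x 1 ^ 2, x 2 * x 0] : Fin 4 → ℂ)
            = c • h ![(g x) 0 ^ 2, (g x) 0 * (g x) 1, (g x) 1 ^ 2,
                      (g x) 2 ^ 2] := by
  rintro ⟨g, h, U, hUo, ⟨x₀, hx₀⟩, hcond⟩
  set v : (Fin 3 → ℂ) → (Fin 4 → ℂ) :=
    fun x => ![(g x) 0 ^ 2, (g x) 0 * (g x) 1, (g x) 1 ^ 2, (g x) 2 ^ 2] with hv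
  set P : (Fin 3 → ℂ) → (Fin 4 → ℂ) :=
    fun x => ![x 0 ^ 2, x 0 * x 1, x 1 ^ 2, x 2 * x 0] with hP
  set Q : (Fin 3 → ℂ) → (Fin 4 → ℂ) := fun x => h (v x) with hQ
  -- Analyticity of the components of `P`.
  have hPa : ∀ i, AnalyticOnNhd ℂ (fun x => P x i) Set.univ := by
    intro i
    fin_cases i <;> simp only [hP, Matrix.cons_val_zero, Matrix.cons_val_one,
      Matrix.head_cons, Matrix.cons_val_two, Matrix.tail_cons, Matrix.cons_val_three,
      Matrix.cons_val_fin_one, Fin.isValue]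
    · exact (proj_analytic 0).pow 2
    · exact (proj_analytic 0).mul (proj_analytic 1)
    · exact (proj_analytic 1).pow 2
    · exact (proj_analytic 2).mul (proj_analytic 0)
  -- Analyticity of `v`.
  have hva : AnalyticOnNhd ℂ v Set.univ := by
    apply AnalyticOnNhd.pi
    intro i
    fin_cases i <;> simp only [hv, Matrix.cons_val_zero, Matrix.cons_val_one,
      Matrix.head_cons, Matrix.cons_val_two, Matrix.tail_cons, Matrix.cons_val_three,
      Matrix.cons_val_fin_one, Fin.isValue]
    · exact (coord_analytic g 0).pow 2
    · exact (coord_analytic g 0).mul (coord_analytic g 1)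
    · exact (coord_analytic g 1).pow 2
    · exact (coord_analytic g 2).pow 2
  -- Analyticity of the components of `Q`.
  have hQa : ∀ i, AnalyticOnNhd ℂ (fun x => Q x i) Set.univ := by
    intro i
    have hL : (fun x => Q x i)
        = fun x => ((ContinuousLinearMap.proj i).comp
            (LinearMap.toContinuousLinearMap h.toLinearMap)) (v x) := by
      funext x; simp [hQ]
    rw [hL]
    exact fun x hx =>
      (((ContinuousLinearMap.proj i).comp
          (LinearMap.toContinuousLinearMap h.toLinearMap)).analyticAt (v x)).comp (hva x hx)
  -- The cross identities hold on `U`, hence everywhere by analytic continuation.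
  have key : ∀ i j : Fin 4, ∀ x, P x i * Q x j - P x j * Q x i = 0 := by
    intro i j
    have hF : AnalyticOnNhd ℂ (fun x => P x i * Q x j - P x j * Q x i) Set.univ :=
      ((hPa i).mul (hQa j)).sub ((hPa j).mul (hQa i))
    have hpre : IsPreconnected (Set.univ : Set (Fin 3 → ℂ)) :=
      (convex_univ : Convex ℝ (Set.univ : Set (Fin 3 → ℂ))).isPreconnected
    have hev : (fun x => P x i * Q x j - P x j * Q x i) =ᶠ[𝓝 x₀] 0 := by
      filter_upwards [hUo.mem_nhds hx₀] with x hx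
      obtain ⟨c, hc, hcx⟩ := hcond x hx
      have hPQ : P x = c • Q x := hcx
      have h1 : P x i = c * Q x i := by rw [hPQ]; simp
      have h2 : P x j = c * Q x j := by rw [hPQ]; simp
      simp only [Pi.zero_apply, h1, h2]; ring
    have := hF.eqOn_zero_of_preconnected_of_eventuallyEq_zero hpre (Set.mem_univ x₀) hev
    exact fun x => this (Set.mem_univ x)
  -- Evaluate along the lines `s ↦ (0, s, 1)` and `s ↦ (s, 0, 1)`.
  set e₂ : Fin 3 → ℂ := ![0, 0, 1] with he₂
  have hQcont : ∀ i, Continuous (fun x => Q x i) := by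
    intro i
    rw [← continuousOn_univ]
    exact (hQa i).continuousOn
  have hNeBot : (𝓝[≠] (0 : ℂ)).NeBot := inferInstance
  -- a helper to pass to the limit
  have limit : ∀ (φ : ℂ → (Fin 3 → ℂ)) (i : Fin 4), Continuous φ → φ 0 = e₂ →
      (∀ s : ℂ, s ≠ 0 → Q (φ s) i = 0) → Q e₂ i = 0 := by
    intro φ i hφ hφ0 hz
    have h1 : Filter.Tendsto (fun s => Q (φ s) i) (𝓝[≠] (0 : ℂ)) (𝓝 (Q e₂ i)) := by
      have h0 := ((hQcont i).comp hφ).tendsto 0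
      simp only [Function.comp_def, hφ0] at h0
      exact h0.mono_left nhdsWithin_le_nhds
    have h2 : Filter.Tendsto (fun s => Q (φ s) i) (𝓝[≠] (0 : ℂ)) (𝓝 0) := by
      refine Filter.Tendsto.congr' ?_ tendsto_const_nhds
      filter_upwards [self_mem_nhdsWithin] with s hs
      exact (hz s hs).symm
    exact tendsto_nhds_unique h1 h2
  have hφcont : Continuous (fun s : ℂ => (![0, s, 1] : Fin 3 → ℂ)) := by
    apply continuous_pi
    intro j
    fin_cases j <;> simp <;> [exact continuous_const; exact continuous_id; exact continuous_const]
  have hψcont : Continuous (fun s : ℂ => (![s, 0, 1] : Fin 3 → ℂ)) := by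
    apply continuous_pi
    intro j
    fin_cases j <;> simp <;> [exact continuous_id; exact continuous_const; exact continuous_const]
  have hQe₂ : ∀ i, Q e₂ i = 0 := by
    intro i
    have hP0 : ∀ s : ℂ, P ![0, s, 1] 0 = 0 ∧ P ![0, s, 1] 1 = 0 ∧ P ![0, s, 1] 2 = s ^ 2
        ∧ P ![0, s, 1] 3 = 0 := by intro s; simp [hP]
    have hP1 : ∀ s : ℂ, P ![s, 0, 1] 0 = s ^ 2 ∧ P ![s, 0, 1] 2 = 0 := by
      intro s; simp [hP]
    fin_cases i
    · refine limit _ _ hφcont (by simp [he₂]) ?_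
      intro s hs
      have hk := key 2 0 ![0, s, 1]
      rw [(hP0 s).1, (hP0 s).2.2.1] at hk
      have hs2 : s ^ 2 ≠ 0 := pow_ne_zero _ hs
      have h' : s ^ 2 * Q ![0, s, 1] 0 = 0 := by linear_combination hk
      exact (mul_eq_zero.mp h').resolve_left hs2
    · refine limit _ _ hφcont (by simp [he₂]) ?_
      intro s hs
      have hk := key 2 1 ![0, s, 1]
      rw [(hP0 s).2.1, (hP0 s).2.2.1] at hk
      have hs2 : s ^ 2 ≠ 0 := pow_ne_zero _ hs
      have h' : s ^ 2 * Q ![0, s, 1] 1 = 0 := by linear_combination hk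
      exact (mul_eq_zero.mp h').resolve_left hs2
    · refine limit _ _ hψcont (by simp [he₂]) ?_
      intro s hs
      have hk := key 0 2 ![s, 0, 1]
      rw [(hP1 s).1, (hP1 s).2] at hk
      have hs2 : s ^ 2 ≠ 0 := pow_ne_zero _ hs
      have h' : s ^ 2 * Q ![s, 0, 1] 2 = 0 := by linear_combination hk
      exact (mul_eq_zero.mp h').resolve_left hs2
    · refine limit _ _ hφcont (by simp [he₂]) ?_
      intro s hs
      have hk := key 2 3 ![0, s, 1]
      rw [(hP0 s).2.2.1, (hP0 s).2.2.2] at hk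
      have hs2 : s ^ 2 ≠ 0 := pow_ne_zero _ hs
      have h' : s ^ 2 * Q ![0, s, 1] 3 = 0 := by linear_combination hk
      exact (mul_eq_zero.mp h').resolve_left hs2
  -- Conclude: `h (v e₂) = 0`, hence `v e₂ = 0`, hence `g e₂ = 0`, contradiction.
  have hhv : h (v e₂) = 0 := funext fun i => hQe₂ i
  have hv0 : v e₂ = 0 := h.map_eq_zero_iff.mp hhv
  have hg0 : g e₂ = 0 := by
    funext j
    fin_cases j
    · have := congrFun hv0 0
      simp only [hv, Matrix.cons_val_zero, Pi.zero_apply] at this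
      exact pow_eq_zero_iff two_ne_zero |>.mp this
    · have := congrFun hv0 2
      simp only [hv, Matrix.cons_val_two, Matrix.tail_cons, Matrix.head_cons,
        Pi.zero_apply] at this
      exact pow_eq_zero_iff two_ne_zero |>.mp this
    · have := congrFun hv0 3
      simp only [hv, Matrix.cons_val_three, Matrix.tail_cons, Matrix.head_cons,
        Pi.zero_apply] at this
      exact pow_eq_zero_iff two_ne_zero |>.mp this
  have he₂0 : e₂ = 0 := g.map_eq_zero_iff.mp hg0
  have : (1 : ℂ) = 0 := by
    have := congrFun he₂0 2
    simp only [he₂, Matrix.cons_val_two, Matrix.tail_cons, Matrix.head_cons, Pi.zero_apply] at this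
    exact this
  exact one_ne_zero this
end
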